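/- Let π: ℝ → ℝ be bounded measurable with |π(s + τ) − π(s)| ≤ ε₀ for all s, let χ(t) = ∫_{-∞}^{t} e^{−(t−s)} π(s) ds, and suppose |χ(η + τ) − χ(η)| ≥ ε₀/8 for some η ∈ ℝ. Then there exists 0 < κ < 1 such that |χ(t + τ) − χ(t)| ≥ ε₀/24 for all t ∈ [η, η + κ). -/

import Mathlib

open MeasureTheory

/-- `χ(t) = ∫_{-∞}^t e^{-(t-s)} π(s) ds`. -/
noncomputable def chi (π : ℝ → ℝ) (t : ℝ) : ℝ :=
  ∫ s in Set.Iic t, Real.exp (-(t - s)) * π s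

lemma expker_int (c a : ℝ) :
    MeasureTheory.IntegrableOn (fun s => Real.exp (-(c - s))) (Set.Iic a) := by
  have h : (fun s : ℝ => Real.exp (-(c - s))) = fun s => Real.exp (-c) * Real.exp s := by
    funext s; rw [← Real.exp_add]; ring_nf
  rw [h]; exact (integrableOn_exp_Iic a).const_mul _

lemma abs_int_le {f : ℝ → ℝ} {S : Set ℝ} :
    |∫ s in S, f s| ≤ ∫ s in S, |f s| := by
  simpa [Real.norm_eq_abs] using
    MeasureTheory.norm_integral_le_integral_norm (μ := MeasureTheory.volume.restrict S) f

lemma chi_integrable (π : ℝ → ℝ) (M : ℝ) (hmeas : Measurable π) (hbd : ∀ t, |π t| ≤ M)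
    (t : ℝ) (S : Set ℝ) (hS : S ⊆ Set.Iic t) (hSm : MeasurableSet S) :
    IntegrableOn (fun s => Real.exp (-(t - s)) * π s) S := by
  have h1 : IntegrableOn (fun s => Real.exp (-(t - s)) * π s) (Set.Iic t) := by
    apply Integrable.mono' ((integrableOn_exp_Iic t).const_mul (M * Real.exp (-t)))
    · exact ((Real.measurable_exp.comp (measurable_const.sub measurable_id).neg).mul
        hmeas).aestronglyMeasurable
    · filter_upwards with s
      rw [Real.norm_eq_abs, abs_mul, Real.abs_exp]
      have : Real.exp (-(t - s)) = Real.exp (-t) * Real.exp s := by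
        rw [← Real.exp_add]; ring_nf
      rw [this]
      have h0 := (abs_nonneg (π s)).trans (hbd s)
      calc Real.exp (-t) * Real.exp s * |π s| ≤ Real.exp (-t) * Real.exp s * M := by
            apply mul_le_mul_of_nonneg_left (hbd s) (by positivity)
        _ = M * Real.exp (-t) * Real.exp s := by ring
  exact h1.mono_set hS

lemma chi_lip (π : ℝ → ℝ) (M : ℝ) (hmeas : Measurable π) (hbd : ∀ t, |π t| ≤ M)
    {a b : ℝ} (hab : a ≤ b) : |chi π b - chi π a| ≤ 2 * M * (b - a) := by
  have hM : 0 ≤ M := (abs_nonneg (π 0)).trans (hbd 0)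
  have hsplit : Set.Iic a ∪ Set.Ioc a b = Set.Iic b := Set.Iic_union_Ioc_eq_Iic hab
  have hI1 := chi_integrable π M hmeas hbd b (Set.Iic a) (hsplit ▸ Set.subset_union_left)
    measurableSet_Iic
  have hI2 := chi_integrable π M hmeas hbd b (Set.Ioc a b) (hsplit ▸ Set.subset_union_right)
    measurableSet_Ioc
  have hchib : chi π b = (∫ s in Set.Iic a, Real.exp (-(b - s)) * π s)
      + ∫ s in Set.Ioc a b, Real.exp (-(b - s)) * π s := by
    rw [chi, ← hsplit, setIntegral_union (Set.Iic_disjoint_Ioc le_rfl) measurableSet_Ioc hI1 hI2]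
  -- first piece bound
  have key1 : |(∫ s in Set.Iic a, Real.exp (-(b - s)) * π s) - chi π a|
      ≤ M * (b - a) := by
    rw [chi, ← integral_sub hI1 (chi_integrable π M hmeas hbd a (Set.Iic a)
      (subset_refl _) measurableSet_Iic)]
    have hb1 : ∀ s ∈ Set.Iic a, |Real.exp (-(b - s)) * π s - Real.exp (-(a - s)) * π s|
        ≤ M * (Real.exp (-(a - s)) - Real.exp (-(b - s))) := by
      intro s hs
      have hex : Real.exp (-(b - s)) ≤ Real.exp (-(a - s)) :=
        Real.exp_le_exp.mpr (by linarith)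
      calc |Real.exp (-(b - s)) * π s - Real.exp (-(a - s)) * π s|
          = (Real.exp (-(a - s)) - Real.exp (-(b - s))) * |π s| := by
            rw [← sub_mul, abs_mul, abs_of_nonpos (by linarith)]; ring
        _ ≤ (Real.exp (-(a - s)) - Real.exp (-(b - s))) * M :=
            mul_le_mul_of_nonneg_left (hbd s) (by linarith)
        _ = M * (Real.exp (-(a - s)) - Real.exp (-(b - s))) := by ring
    have hIg : IntegrableOn (fun s => M * (Real.exp (-(a - s)) - Real.exp (-(b - s))))
        (Set.Iic a) := by
      apply Integrable.const_mul
      apply Integrable.sub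
      · exact expker_int a a
      · exact expker_int b a
    calc |∫ s in Set.Iic a, (Real.exp (-(b - s)) * π s - Real.exp (-(a - s)) * π s)|
        ≤ ∫ s in Set.Iic a, M * (Real.exp (-(a - s)) - Real.exp (-(b - s))) := by
          apply abs_int_le.trans
          apply setIntegral_mono_on _ hIg measurableSet_Iic hb1
          · exact (hI1.sub (chi_integrable π M hmeas hbd a (Set.Iic a)
              (subset_refl _) measurableSet_Iic)).abs
      _ = M * (1 - Real.exp (-(b - a))) := by
          rw [MeasureTheory.integral_const_mul, integral_sub]
          · congr 1
            have e1 : ∫ s in Set.Iic a, Real.exp (-(a - s)) = 1 := by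
              have : ∀ s : ℝ, Real.exp (-(a - s)) = Real.exp (-a) * Real.exp s := by
                intro s; rw [← Real.exp_add]; ring_nf
              simp only [this, MeasureTheory.integral_const_mul, integral_exp_Iic]
              rw [← Real.exp_add]; simp
            have e2 : ∫ s in Set.Iic a, Real.exp (-(b - s)) = Real.exp (-(b - a)) := by
              have : ∀ s : ℝ, Real.exp (-(b - s)) = Real.exp (-b) * Real.exp s := by
                intro s; rw [← Real.exp_add]; ring_nf
              simp only [this, MeasureTheory.integral_const_mul, integral_exp_Iic]
            rw [e1, e2]
          · exact expker_int a a
          · exact expker_int b a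
      _ ≤ M * (b - a) := by
          apply mul_le_mul_of_nonneg_left _ hM
          have := Real.add_one_le_exp (-(b - a))
          linarith
  have key2 : |∫ s in Set.Ioc a b, Real.exp (-(b - s)) * π s| ≤ M * (b - a) := by
    calc |∫ s in Set.Ioc a b, Real.exp (-(b - s)) * π s|
        ≤ ∫ s in Set.Ioc a b, M := by
          apply abs_int_le.trans
          apply setIntegral_mono_on hI2.abs ((integrableOn_const_iff (hC := enorm_ne_top)).mpr (by
            right; simp [Real.volume_Ioc])) measurableSet_Ioc
          intro s hs
          rw [abs_mul, Real.abs_exp]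
          calc Real.exp (-(b - s)) * |π s| ≤ 1 * M := by
                apply mul_le_mul (Real.exp_le_one_iff.mpr (by linarith [hs.2]))
                  (hbd s) (abs_nonneg _) zero_le_one
            _ = M := one_mul M
      _ = M * (b - a) := by
          rw [setIntegral_const, Real.volume_real_Ioc_of_le hab, smul_eq_mul]
          ring
  calc |chi π b - chi π a|
      = |((∫ s in Set.Iic a, Real.exp (-(b - s)) * π s) - chi π a)
        + ∫ s in Set.Ioc a b, Real.exp (-(b - s)) * π s| := by rw [hchib]; congr 1; ring
    _ ≤ _ + _ := abs_add_le _ _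
    _ ≤ M * (b - a) + M * (b - a) := add_le_add key1 key2
    _ = 2 * M * (b - a) := by ring

theorem chi_separation_case_ii (π : ℝ → ℝ) (M : ℝ)
    (hmeas : Measurable π) (hbd : ∀ t, |π t| ≤ M)
    (τ η ε₀ : ℝ) (hε₀ : 0 < ε₀)
    (hπ : ∀ s : ℝ, |π (s + τ) - π s| ≤ ε₀)
    (hbig : ε₀ / 8 ≤ |chi π (η + τ) - chi π η|) :
    ∃ κ : ℝ, 0 < κ ∧ κ < 1 ∧
      ∀ t ∈ Set.Ico η (η + κ), ε₀ / 24 ≤ |chi π (t + τ) - chi π t| := by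
  have hM : 0 ≤ M := (abs_nonneg (π 0)).trans (hbd 0)
  refine ⟨min (ε₀ / (48 * (M + 1))) (1 / 2), ?_, ?_, ?_⟩
  · apply lt_min (by positivity) (by norm_num)
  · exact lt_of_le_of_lt (min_le_right _ _) (by norm_num)
  · intro t ht
    obtain ⟨ht1, ht2⟩ := ht
    have hd : t - η < ε₀ / (48 * (M + 1)) :=
      lt_of_lt_of_le (sub_lt_iff_lt_add'.mpr ht2) (min_le_left _ _)
    have l1 : |chi π (t + τ) - chi π (η + τ)| ≤ 2 * M * (t - η) := by
      have := chi_lip π M hmeas hbd (a := η + τ) (b := t + τ) (by linarith)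
      simpa using this.trans_eq (by ring)
    have l2 : |chi π t - chi π η| ≤ 2 * M * (t - η) := chi_lip π M hmeas hbd ht1
    have tri : |chi π (η + τ) - chi π η| - |chi π (t + τ) - chi π t|
        ≤ |chi π (t + τ) - chi π (η + τ)| + |chi π t - chi π η| := by
      have := abs_sub_abs_le_abs_sub (chi π (η + τ) - chi π η) (chi π (t + τ) - chi π t)
      have h2 : |(chi π (η + τ) - chi π η) - (chi π (t + τ) - chi π t)|
          ≤ |chi π (t + τ) - chi π (η + τ)| + |chi π t - chi π η| := by
        have := abs_sub (chi π (η + τ) - chi π (t + τ)) (chi π η - chi π t)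
        calc |(chi π (η + τ) - chi π η) - (chi π (t + τ) - chi π t)|
            = |(chi π (η + τ) - chi π (t + τ)) - (chi π η - chi π t)| := by ring_nf
          _ ≤ |chi π (η + τ) - chi π (t + τ)| + |chi π η - chi π t| := abs_sub _ _
          _ = |chi π (t + τ) - chi π (η + τ)| + |chi π t - chi π η| := by
              rw [abs_sub_comm, abs_sub_comm (chi π η)]
      linarith
    have hbound : 4 * M * (t - η) ≤ ε₀ / 12 := by
      have h1 : (t - η) ≤ ε₀ / (48 * (M + 1)) := le_of_lt hd
      have h2 : 4 * M * (t - η) ≤ 4 * M * (ε₀ / (48 * (M + 1))) :=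
        mul_le_mul_of_nonneg_left h1 (by positivity)
      have h3 : 4 * M * (ε₀ / (48 * (M + 1))) ≤ ε₀ / 12 := by
        rw [mul_div_assoc', div_le_div_iff₀ (by positivity) (by norm_num)]
        nlinarith [hε₀.le, hM]
      linarith only [h2, h3]
    linarith only [hbig, tri, l1, l2, hbound]
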